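/- (Theorem 1, skill transition bound.) Let (Ω, 𝒜, μ) be a probability space, t ≥ 1 a natural number, and K > 1, c > 0, m > 0, δ ≥ 0 real numbers. Let P_1, …, P_t, P', X_1, …, X_t, r : Ω → ℝ be measurable functions such that for every ω and every i: X_i(ω) > 0, P_i(ω) ≥ ((K-1)/K)·X_i(ω), P'(ω) ≤ r(ω) + 1/K, and r(ω) / (∏_{i=1}^t X_i(ω))^{1/t} < m/2. If μ{ω : X_i(ω) > c} > 1 - δ for every i, then μ{ω : P'(ω) / (∏_{i=1}^t P_i(ω))^{1/t} < K·m/(2(K-1)) + 1/(c·(K-1))} > 1 - t·δ, where powers are real powers with exponent 1/t. -/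

import Mathlib

open MeasureTheory

theorem stmt_9 {Ω : Type*} [MeasurableSpace Ω] (μ : Measure Ω) [IsProbabilityMeasure μ]
    (t : ℕ) (ht : 1 ≤ t) (K c m δ : ℝ) (hK : 1 < K) (hc : 0 < c) (hm : 0 < m)
    (hδ : 0 ≤ δ)
    (P : Fin t → Ω → ℝ) (P' : Ω → ℝ) (X : Fin t → Ω → ℝ) (r : Ω → ℝ)
    (hPmeas : ∀ i, Measurable (P i)) (hP'meas : Measurable P')
    (hXmeas : ∀ i, Measurable (X i)) (hrmeas : Measurable r)
    (hX : ∀ ω, ∀ i, 0 < X i ω)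
    (hPX : ∀ ω, ∀ i, ((K - 1) / K) * X i ω ≤ P i ω)
    (hP' : ∀ ω, P' ω ≤ r ω + 1 / K)
    (hr : ∀ ω, r ω / (∏ i, X i ω) ^ ((1 : ℝ) / t) < m / 2)
    (hXc : ∀ i, 1 - δ < (μ {ω | c < X i ω}).toReal) :
    1 - t * δ <
      (μ {ω | P' ω / (∏ i, P i ω) ^ ((1 : ℝ) / t) <
        K * m / (2 * (K - 1)) + 1 / (c * (K - 1))}).toReal := by
  have htpos : (0:ℝ) < t := by exact_mod_cast ht
  have htne : (t:ℝ) ≠ 0 := ne_of_gt htpos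
  have hK0 : (0:ℝ) < K := lt_trans one_pos hK
  have hKm1 : (0:ℝ) < K - 1 := by linarith
  have hcoef : (0:ℝ) < (K - 1) / K := div_pos hKm1 hK0
  -- Pointwise claim on the good event
  have key : (⋂ i, {ω | c < X i ω}) ⊆
      {ω | P' ω / (∏ i, P i ω) ^ ((1 : ℝ) / t) <
        K * m / (2 * (K - 1)) + 1 / (c * (K - 1))} := by
    intro ω hω
    simp only [Set.mem_iInter, Set.mem_setOf_eq] at hω ⊢
    set Xp := (∏ i, X i ω) ^ ((1 : ℝ) / t) with hXpdef
    set Q := (∏ i, P i ω) ^ ((1 : ℝ) / t) with hQdef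
    have hXprod : 0 < ∏ i, X i ω := Finset.prod_pos (fun i _ => hX ω i)
    have hXppos : 0 < Xp := Real.rpow_pos_of_pos hXprod _
    -- Xp > c
    have hXpc : c < Xp := by
      have h1 : c ^ (t:ℕ) < ∏ i, X i ω := by
        calc c ^ (t:ℕ) = ∏ _i : Fin t, c := by simp
        _ < ∏ i, X i ω := by
          apply Finset.prod_lt_prod_of_nonempty
          · intro i _; exact hc
          · intro i _; exact hω i
          · exact Finset.univ_nonempty_iff.2 ⟨⟨0, ht⟩⟩
      calc c = (c ^ (t:ℕ)) ^ ((1:ℝ)/t) := by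
            rw [← Real.rpow_natCast c t, ← Real.rpow_mul hc.le]
            rw [mul_one_div, div_self htne, Real.rpow_one]
        _ < Xp := by
            apply Real.rpow_lt_rpow (by positivity) h1 (by positivity)
    -- Q ≥ (K-1)/K * Xp
    have hprodP : ((K - 1) / K) ^ (t:ℕ) * ∏ i, X i ω ≤ ∏ i, P i ω := by
      calc ((K - 1) / K) ^ (t:ℕ) * ∏ i, X i ω
          = ∏ i, ((K - 1) / K * X i ω) := by
            rw [Finset.prod_mul_distrib]; simp [div_pow]
        _ ≤ ∏ i, P i ω := by
            apply Finset.prod_le_prod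
            · intro i _; exact mul_nonneg hcoef.le (hX ω i).le
            · intro i _; exact hPX ω i
    have hQge : (K - 1) / K * Xp ≤ Q := by
      have h2 : (((K - 1) / K) ^ (t:ℕ) * ∏ i, X i ω) ^ ((1:ℝ)/t)
          = (K - 1) / K * Xp := by
        rw [Real.mul_rpow (by positivity) hXprod.le, ← Real.rpow_natCast ((K-1)/K) t,
          ← Real.rpow_mul hcoef.le, mul_one_div, div_self htne, Real.rpow_one]
      rw [← h2]
      exact Real.rpow_le_rpow (by positivity) hprodP (by positivity)
    have hQpos : 0 < Q := lt_of_lt_of_le (by positivity) hQge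
    have hBpos : 0 < K * m / (2 * (K - 1)) + 1 / (c * (K - 1)) := by positivity
    have hP'n : P' ω / Q ≤ (r ω + 1 / K) / Q :=
      (div_le_div_iff_of_pos_right hQpos).2 (hP' ω)
    rcases le_or_gt (r ω + 1 / K) 0 with hn | hn
    · have : P' ω / Q ≤ 0 := by
        apply div_nonpos_of_nonpos_of_nonneg (le_trans (hP' ω) hn) hQpos.le
      linarith
    · have hr' : r ω < m / 2 * Xp := by
        have := hr ω
        rw [div_lt_iff₀ hXppos] at this
        exact this
      have h3 : (r ω + 1 / K) / Q ≤ (r ω + 1 / K) / ((K - 1) / K * Xp) :=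
        div_le_div_of_nonneg_left hn.le (by positivity) hQge
      have h4 : (r ω + 1 / K) / ((K - 1) / K * Xp)
          < K * m / (2 * (K - 1)) + 1 / (c * (K - 1)) := by
        rw [div_lt_iff₀ (by positivity)]
        have hXpc' : Xp / (c * K) > 1 / K := by
          rw [gt_iff_lt, div_lt_div_iff₀ (by positivity) (by positivity)]
          nlinarith
        have expand : (K * m / (2 * (K - 1)) + 1 / (c * (K - 1))) * ((K - 1) / K * Xp)
            = m / 2 * Xp + Xp / (c * K) := by
          field_simp
        rw [expand]
        linarith
      calc P' ω / Q ≤ (r ω + 1 / K) / Q := hP'n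
        _ ≤ (r ω + 1 / K) / ((K - 1) / K * Xp) := h3
        _ < _ := h4
  -- Measure-theoretic part
  set S := {ω | P' ω / (∏ i, P i ω) ^ ((1 : ℝ) / t) <
        K * m / (2 * (K - 1)) + 1 / (c * (K - 1))}
  have hEmeas : ∀ i, MeasurableSet {ω | c < X i ω} := fun i =>
    measurableSet_lt measurable_const (hXmeas i)
  have hμmono : (μ (⋂ i, {ω | c < X i ω})).toReal ≤ (μ S).toReal :=
    ENNReal.toReal_mono (measure_ne_top μ S) (measure_mono key)
  have hcompl : (μ (⋂ i, {ω | c < X i ω})).toReal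
      = 1 - (μ (⋃ i, {ω | c < X i ω}ᶜ)).toReal := by
    have h1 : (⋃ i, {ω | c < X i ω}ᶜ) = (⋂ i, {ω | c < X i ω})ᶜ := by
      simp [Set.compl_iInter]
    rw [h1, prob_compl_eq_one_sub (MeasurableSet.iInter hEmeas),
      ENNReal.toReal_sub_of_le prob_le_one ENNReal.one_ne_top]
    simp
  have hsum : (μ (⋃ i, {ω | c < X i ω}ᶜ)).toReal < t * δ := by
    have h1 : μ (⋃ i, {ω | c < X i ω}ᶜ) ≤ ∑ i, μ ({ω | c < X i ω}ᶜ) := by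
      calc μ (⋃ i, {ω | c < X i ω}ᶜ) ≤ ∑' i, μ ({ω | c < X i ω}ᶜ) :=
            measure_iUnion_le _
        _ = ∑ i, μ ({ω | c < X i ω}ᶜ) := tsum_fintype _
    have h2 : (∑ i, μ ({ω | c < X i ω}ᶜ)).toReal
        = ∑ i, (μ ({ω | c < X i ω}ᶜ)).toReal :=
      ENNReal.toReal_sum (fun i _ => measure_ne_top μ _)
    have h3 : ∀ i : Fin t, (μ ({ω | c < X i ω}ᶜ)).toReal < δ := by
      intro i
      rw [prob_compl_eq_one_sub (hEmeas i),
        ENNReal.toReal_sub_of_le prob_le_one ENNReal.one_ne_top]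
      have := hXc i
      simp only [ENNReal.toReal_one]
      linarith
    calc (μ (⋃ i, {ω | c < X i ω}ᶜ)).toReal
        ≤ (∑ i, μ ({ω | c < X i ω}ᶜ)).toReal :=
          ENNReal.toReal_mono (by
            apply ne_of_lt
            apply lt_of_le_of_lt (Finset.sum_le_sum (fun i _ => prob_le_one))
            simp [lt_top_iff_ne_top]) h1
      _ = ∑ i, (μ ({ω | c < X i ω}ᶜ)).toReal := h2
      _ < ∑ _i : Fin t, δ := by
          apply Finset.sum_lt_sum_of_nonempty (Finset.univ_nonempty_iff.2 ⟨⟨0, ht⟩⟩)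
          intro i _; exact h3 i
      _ = t * δ := by simp [mul_comm]
  linarith
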